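/- Let ω(z) = e^{iθ}z^2 and α ∈ [π/2, π). Define ω̃(z) = -z·(ω(z)^2 + [ω(z) - (1/2)ω'(z)z] - (1/2)ω'(z)·(1 + z cos α)/(cos α + z)) / (-(1 + z cos α)/(cos α + z) - [ω(z) - (1/2)ω'(z)z]·(1 + z cos α)/(cos α + z) + (1/2)ω'(z)z^2). Then ω̃(z) = -e^{iθ}z^2 wherever defined, and in particular |ω̃(z)| < 1 for all z in the open unit disk. -/

import Mathlib

/-- For `ω(z) = e^{iθ}z²` (so `ω'(z) = 2e^{iθ}z`) and `α ∈ [π/2, π)`, the dilatation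
`ω̃(z) = -z(ω² + (ω - (1/2)ω'z) - (1/2)ω'·q)/(-q - (ω - (1/2)ω'z)·q + (1/2)ω'z²)` with
`q = (1 + z cos α)/(cos α + z)` equals `-e^{iθ}z²` wherever defined; in particular
`|ω̃(z)| < 1` on the open unit disk. -/
theorem dilatation_strip (θ α : ℝ) (hα₁ : Real.pi / 2 ≤ α) (hα₂ : α < Real.pi)
    (z : ℂ) (hz : ‖z‖ < 1) :
    let e := Complex.exp ((θ : ℂ) * Complex.I)
    let w := e * z ^ 2
    let w' := 2 * e * z
    let q := (1 + z * (Real.cos α : ℂ)) / ((Real.cos α : ℂ) + z)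
    let num := w ^ 2 + (w - (1 / 2) * w' * z) - (1 / 2) * w' * q
    let den := -q - (w - (1 / 2) * w' * z) * q + (1 / 2) * w' * z ^ 2
    (den ≠ 0 → -z * num / den = -e * z ^ 2) ∧ ‖-z * num / den‖ < 1 := by
  intro e w w' q num den
  have hnum : num = e * z * den := by
    simp only [num, den, w, w']
    ring
  have hval : ∀ _ : den ≠ 0, -z * num / den = -e * z ^ 2 := by
    intro hden
    rw [hnum]
    field_simp
  have he : ‖e‖ = 1 := by
    show ‖Complex.exp _‖ = 1
    rw [Complex.norm_exp]
    simp
  refine ⟨hval, ?_⟩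
  by_cases hden : den = 0
  · simp [hden, hnum]
  · rw [hval hden]
    have : ‖-e * z ^ 2‖ = ‖z‖ ^ 2 := by
      rw [norm_mul, norm_neg, he, one_mul, norm_pow]
    rw [this]
    calc ‖z‖ ^ 2 ≤ ‖z‖ := pow_le_of_le_one (norm_nonneg z) hz.le (by norm_num)
    _ < 1 := hz
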